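/- For all integers d ≥ 3 and M ≥ 3, the average effective resistance of the d-dimensional toroidal grid satisfies R_ave(T_{M^d}) ≥ 1/(4d); that is, M^{-d} Σ_{k ∈ {0,...,M-1}^d, k ≠ 0} (2d - 2 Σ_{i=1}^d cos(2π k_i / M))^{-1} ≥ 1/(4d). -/

import Mathlib

open Real Finset

/-- Average effective resistance of the `d`-dimensional toroidal grid `T_{M^d}`
(spectral formula). -/
noncomputable def RaveTorus (d M : ℕ) : ℝ :=
  (1 / (M : ℝ) ^ d) *
    ∑ k ∈ (Fintype.piFinset fun _ : Fin d => Finset.range M).filter (· ≠ 0),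
      (2 * d - 2 * ∑ i, Real.cos (2 * π * k i / M))⁻¹

/-- `cos (2πk/M) < 1` when `0 < k < M`. -/
lemma cos_aux {k M : ℕ} (hk : 0 < k) (hkM : k < M) :
    Real.cos (2 * π * k / M) < 1 := by
  have hM : (0:ℝ) < M := by exact_mod_cast hk.trans hkM
  have hx0 : (0:ℝ) < 2 * π * k / M := by
    have : (0:ℝ) < k := by exact_mod_cast hk
    positivity
  have hx2 : 2 * π * k / M < 2 * π := by
    rw [div_lt_iff₀ hM]
    have hk' : (k:ℝ) < M := by exact_mod_cast hkM
    nlinarith [Real.pi_pos]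
  refine lt_of_le_of_ne (Real.cos_le_one _) ?_
  intro h
  have := (Real.cos_eq_one_iff_of_lt_of_lt (by linarith) hx2).1 h
  linarith

theorem torus_resistance_lower_bound (d M : ℕ) (hd : 3 ≤ d) (hM : 3 ≤ M) :
    1 / (4 * d) ≤ RaveTorus d M := by
  have hdR : (3:ℝ) ≤ d := by exact_mod_cast hd
  have hMR : (3:ℝ) ≤ M := by exact_mod_cast hM
  have hM0 : 0 < M := by omega
  set s := (Fintype.piFinset fun _ : Fin d => Finset.range M).filter (· ≠ 0) with hs
  -- general bounds on the denominator
  have hden : ∀ k ∈ s, 0 < 2 * (d:ℝ) - 2 * ∑ i, Real.cos (2 * π * k i / M) ∧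
      2 * (d:ℝ) - 2 * ∑ i, Real.cos (2 * π * k i / M) ≤ 4 * d := by
    intro k hk
    rw [hs, Finset.mem_filter, Fintype.mem_piFinset] at hk
    obtain ⟨hk1, hk2⟩ := hk
    have hklt : ∀ i, k i < M := fun i => Finset.mem_range.1 (hk1 i)
    obtain ⟨i0, hi0⟩ : ∃ i, k i ≠ 0 := by
      by_contra h; push_neg at h; exact hk2 (funext fun i => h i)
    have hlt : ∑ i, Real.cos (2 * π * k i / M) < ∑ _i : Fin d, (1:ℝ) := by
      refine Finset.sum_lt_sum (fun i _ => Real.cos_le_one _) ⟨i0, Finset.mem_univ _, ?_⟩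
      exact cos_aux (Nat.pos_of_ne_zero hi0) (hklt i0)
    have hge : (-(d:ℝ)) ≤ ∑ i, Real.cos (2 * π * k i / M) := by
      have : ∑ _i : Fin d, (-1:ℝ) ≤ ∑ i, Real.cos (2 * π * k i / M) :=
        Finset.sum_le_sum fun i _ => Real.neg_one_le_cos _
      simpa using this
    simp only [Finset.sum_const, Finset.card_univ, Fintype.card_fin, nsmul_eq_mul,
      mul_one] at hlt
    constructor <;> nlinarith
  -- each term is at least 1/(4d)
  have hterm : ∀ k ∈ s, 1 / (4 * (d:ℝ)) ≤
      (2 * (d:ℝ) - 2 * ∑ i, Real.cos (2 * π * k i / M))⁻¹ := by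
    intro k hk
    obtain ⟨h1, h2⟩ := hden k hk
    rw [one_div]
    exact inv_anti₀ h1 h2
  -- the special point k0
  have hd0 : 0 < d := by omega
  set i0 : Fin d := ⟨0, hd0⟩ with hi0
  set k0 : Fin d → ℕ := fun i => if i = i0 then 1 else 0 with hk0
  have hk0s : k0 ∈ s := by
    rw [hs, Finset.mem_filter, Fintype.mem_piFinset]
    refine ⟨fun i => ?_, ?_⟩
    · simp only [hk0]; split <;> simp [Finset.mem_range] <;> omega
    · intro h
      have : k0 i0 = 0 := congrFun h i0
      simp [hk0] at this
  -- value at k0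
  have hsumk0 : ∑ i, Real.cos (2 * π * k0 i / M) = Real.cos (2 * π / M) + ((d:ℝ) - 1) := by
    have : ∀ i : Fin d, Real.cos (2 * π * k0 i / M) =
        (if i = i0 then Real.cos (2 * π / M) - 1 else 0) + 1 := by
      intro i
      by_cases h : i = i0 <;> simp [hk0, h]
    rw [Finset.sum_congr rfl fun i _ => this i, Finset.sum_add_distrib,
      Finset.sum_ite_eq' Finset.univ i0 (fun _ => Real.cos (2 * π / M) - 1)]
    simp
    ring
  have hk0term : (1:ℝ)/4 ≤ (2 * (d:ℝ) - 2 * ∑ i, Real.cos (2 * π * k0 i / M))⁻¹ := by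
    obtain ⟨h1, _⟩ := hden k0 hk0s
    have hle : 2 * (d:ℝ) - 2 * ∑ i, Real.cos (2 * π * k0 i / M) ≤ 4 := by
      rw [hsumk0]
      have := Real.neg_one_le_cos (2 * π / M)
      nlinarith
    rw [one_div]
    exact inv_anti₀ h1 hle
  -- cardinality of s
  have hcard : s.card = M ^ d - 1 := by
    rw [hs]
    have h0 : (0 : Fin d → ℕ) ∈ Fintype.piFinset fun _ : Fin d => Finset.range M := by
      rw [Fintype.mem_piFinset]; intro i; simp [Finset.mem_range]; omega
    rw [Finset.filter_ne', Finset.card_erase_of_mem h0]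
    simp [Fintype.card_piFinset]
  -- sum lower bound
  set f : (Fin d → ℕ) → ℝ := fun k => (2 * (d:ℝ) - 2 * ∑ i, Real.cos (2 * π * k i / M))⁻¹
    with hf
  have hsplit : ∑ k ∈ s, f k = f k0 + ∑ k ∈ s.erase k0, f k :=
    (Finset.add_sum_erase s f hk0s).symm
  have herasecard : (s.erase k0).card = M ^ d - 2 := by
    rw [Finset.card_erase_of_mem hk0s, hcard]
    omega
  have hMd : 2 ≤ M ^ d := by
    calc 2 ≤ 3 := by norm_num
    _ ≤ 3 ^ 3 := by norm_num
    _ ≤ M ^ d := Nat.pow_le_pow_left hM 3 |>.trans (Nat.pow_le_pow_right (by omega) hd)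
  have heraselb : ((M:ℝ) ^ d - 2) * (1 / (4 * (d:ℝ))) ≤ ∑ k ∈ s.erase k0, f k := by
    have := Finset.card_nsmul_le_sum (s.erase k0) f (1 / (4 * (d:ℝ)))
      (fun k hk => hterm k (Finset.mem_of_mem_erase hk))
    rw [herasecard, nsmul_eq_mul] at this
    have hcast : ((M ^ d - 2 : ℕ) : ℝ) = (M:ℝ) ^ d - 2 := by
      rw [Nat.cast_sub hMd]; push_cast; ring
    rwa [hcast] at this
  have hSlb : (M:ℝ) ^ d * (1 / (4 * (d:ℝ))) ≤ ∑ k ∈ s, f k := by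
    rw [hsplit]
    have h4d : (0:ℝ) < 4 * d := by linarith
    have : (M:ℝ) ^ d * (1 / (4 * d)) ≤ 1/4 + ((M:ℝ) ^ d - 2) * (1 / (4 * d)) := by
      have h2 : (2:ℝ) * (1 / (4 * d)) ≤ 1/4 := by
        rw [mul_one_div, div_le_div_iff₀ h4d (by norm_num)]
        nlinarith
      nlinarith
    calc (M:ℝ) ^ d * (1 / (4 * d)) ≤ 1/4 + ((M:ℝ) ^ d - 2) * (1 / (4 * d)) := this
      _ ≤ f k0 + ∑ k ∈ s.erase k0, f k := add_le_add hk0term heraselb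
  -- conclude
  rw [RaveTorus]
  have hN : (0:ℝ) < (M:ℝ) ^ d := by positivity
  have := mul_le_mul_of_nonneg_left hSlb (le_of_lt (by positivity : (0:ℝ) < 1 / (M:ℝ) ^ d))
  calc (1:ℝ) / (4 * d) = (1 / (M:ℝ) ^ d) * ((M:ℝ) ^ d * (1 / (4 * d))) := by
        field_simp
    _ ≤ _ := this
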